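/- Let p > 5 and ω > 0, and let (α,β) satisfy α > 0, 2α−β ≥ 0 and 2α+β ≥ 0. Then l^{α,β}_ω = j^{α,β}_ω, where l^{α,β}_ω = inf{ S_{ω,0}(φ) : φ ∈ H¹(ℝ), φ ≠ 0, K^{α,β}_{ω,0}(φ) = 0 } and j^{α,β}_ω = inf{ J^{α,β}_{ω,0}(φ) : φ ∈ H¹(ℝ), φ ≠ 0, K^{α,β}_{ω,0}(φ) ≤ 0 }. -/

import Mathlib

open MeasureTheory Real Filter Topology
open scoped ENNReal

/-- `φ : ℝ → ℂ` lies in `H¹(ℝ)`: `φ ∈ L²(ℝ)` together with a weak derivative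
`dx ∈ L²(ℝ)` such that `φ x = φ 0 + ∫₀ˣ dx (t) dt` for all `x`. -/
structure H1 where
  toFun : ℝ → ℂ
  dx : ℝ → ℂ
  memL2 : MemLp toFun 2 (volume : Measure ℝ)
  dx_memL2 : MemLp dx 2 (volume : Measure ℝ)
  eq_int : ∀ x : ℝ, toFun x = toFun 0 + ∫ t in (0:ℝ)..x, dx t

/-- `‖∂ₓφ‖²_{L²}` -/
noncomputable def gradSq (φ : H1) : ℝ := ∫ x : ℝ, ‖φ.dx x‖ ^ 2

/-- `‖φ‖²_{L²}` -/
noncomputable def massSq (φ : H1) : ℝ := ∫ x : ℝ, ‖φ.toFun x‖ ^ 2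

/-- `‖φ‖^{p+1}_{L^{p+1}}` -/
noncomputable def lpPow (p : ℝ) (φ : H1) : ℝ := ∫ x : ℝ, ‖φ.toFun x‖ ^ (p + 1)

/-- The action `S_{ω,μ}(φ) = (1/4)‖∂ₓφ‖²_{L²} − (μ/2)|φ(0)|² + (ω/2)‖φ‖²_{L²}
− (1/(p+1))‖φ‖^{p+1}_{L^{p+1}}`. -/
noncomputable def Sfun (p ω μ : ℝ) (φ : H1) : ℝ :=
  (1/4) * gradSq φ - (μ/2) * ‖φ.toFun 0‖ ^ 2 + (ω/2) * massSq φ - (1/(p+1)) * lpPow p φ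

/-- The virial functional `P_μ(φ) = (1/2)‖∂ₓφ‖²_{L²} − (μ/2)|φ(0)|²
− ((p−1)/(2(p+1)))‖φ‖^{p+1}_{L^{p+1}}`. -/
noncomputable def Pfun (p μ : ℝ) (φ : H1) : ℝ :=
  (1/2) * gradSq φ - (μ/2) * ‖φ.toFun 0‖ ^ 2 - ((p-1)/(2*(p+1))) * lpPow p φ

/-- The Nehari functional `I_{ω,γ}(φ) = (1/2)‖∂ₓφ‖²_{L²} − γ|φ(0)|² + ω‖φ‖²_{L²}
− ‖φ‖^{p+1}_{L^{p+1}}`. -/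
noncomputable def Ifun (p ω γ : ℝ) (φ : H1) : ℝ :=
  (1/2) * gradSq φ - γ * ‖φ.toFun 0‖ ^ 2 + ω * massSq φ - lpPow p φ

/-- `K^{α,β}_{ω,γ}`. -/
noncomputable def Kfun (p ω γ α β : ℝ) (φ : H1) : ℝ :=
  ((2*α-β)/4) * gradSq φ + (ω*(2*α+β)/2) * massSq φ - γ*α*‖φ.toFun 0‖ ^ 2
    - (((p+1)*α+β)/(p+1)) * lpPow p φ

/-- `J^{α,β}_{ω,γ}(φ) = S_{ω,γ}(φ) − K^{α,β}_{ω,γ}(φ)/μ̄` with `μ̄ = max(2α−β, 2α+β)`. -/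
noncomputable def Jfun (p ω γ α β : ℝ) (φ : H1) : ℝ :=
  Sfun p ω γ φ - Kfun p ω γ α β φ / max (2*α-β) (2*α+β)

/-- The mass `M(φ) = (1/2)‖φ‖²_{L²}`. -/
noncomputable def Mfun (φ : H1) : ℝ := (1/2) * massSq φ

/-- The energy `E_μ(φ) = (1/4)‖∂ₓφ‖²_{L²} − (μ/2)|φ(0)|² − (1/(p+1))‖φ‖^{p+1}_{L^{p+1}}`. -/
noncomputable def Efun (p μ : ℝ) (φ : H1) : ℝ :=
  (1/4) * gradSq φ - (μ/2) * ‖φ.toFun 0‖ ^ 2 - (1/(p+1)) * lpPow p φ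

/-- `n_ω`: infimum of `S_{ω,γ}` over nonzero `H¹(ℝ)` functions with `P_γ = 0`. -/
noncomputable def nOmega (p γ ω : ℝ) : ℝ :=
  sInf {s : ℝ | ∃ φ : H1, φ.toFun ≠ 0 ∧ Pfun p γ φ = 0 ∧ Sfun p ω γ φ = s}

/-- `r_ω`: infimum of `S_{ω,γ}` over nonzero even `H¹(ℝ)` functions with `P_γ = 0`. -/
noncomputable def rOmega (p γ ω : ℝ) : ℝ :=
  sInf {s : ℝ | ∃ φ : H1, φ.toFun ≠ 0 ∧ (∀ x, φ.toFun (-x) = φ.toFun x) ∧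
    Pfun p γ φ = 0 ∧ Sfun p ω γ φ = s}

/-- `l_ω`: infimum of `S_{ω,0}` over nonzero `H¹(ℝ)` functions with `P_0 = 0`. -/
noncomputable def lOmega (p ω : ℝ) : ℝ :=
  sInf {s : ℝ | ∃ φ : H1, φ.toFun ≠ 0 ∧ Pfun p 0 φ = 0 ∧ Sfun p ω 0 φ = s}

/-- The inverse hyperbolic tangent. -/
noncomputable def artanh (x : ℝ) : ℝ := (1/2) * Real.log ((1+x)/(1-x))

/-- The standing-wave profile
`Q_{ω,γ}(x) = ( ((p+1)ω/2)·sech²( ((p−1)√ω/√2)|x| + artanh(γ/√(2ω)) ) )^{1/(p−1)}`. -/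
noncomputable def Qsol (p γ ω : ℝ) : ℝ → ℝ := fun x =>
  (((p+1)*ω/2) *
    (1 / Real.cosh (((p-1)*Real.sqrt ω/Real.sqrt 2) * |x| + _root_.artanh (γ / Real.sqrt (2*ω)))) ^ 2)
  ^ (1/(p-1))

/-- The free ground state `Q_{1,0}(x) = ( ((p+1)/2)·sech²( ((p−1)/√2)x ) )^{1/(p−1)}`. -/
noncomputable def Qfree (p : ℝ) : ℝ → ℝ := fun x =>
  (((p+1)/2) * (1 / Real.cosh (((p-1)/Real.sqrt 2) * x)) ^ 2) ^ (1/(p-1))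

/-- `‖φ‖²_𝓗 = (1/4)‖∂ₓφ‖²_{L²} + (ω/2)‖φ‖²_{L²} − (γ/2)|φ(0)|²`. -/
noncomputable def HnormSq (ω γ : ℝ) (φ : H1) : ℝ :=
  (1/4) * gradSq φ + (ω/2) * massSq φ - (γ/2) * ‖φ.toFun 0‖ ^ 2

lemma l2_intervalIntegrable {f : ℝ → ℂ} (hf : MemLp f 2 (volume : Measure ℝ)) (a b : ℝ) :
    IntervalIntegrable f volume a b := by
  rw [intervalIntegrable_iff]
  haveI : IsFiniteMeasure ((volume : Measure ℝ).restrict (Set.uIoc a b)) := by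
    constructor
    rw [Measure.restrict_apply_univ, Set.uIoc, Real.volume_Ioc]
    exact ENNReal.ofReal_lt_top
  exact (hf.restrict (Set.uIoc a b)).integrable (by norm_num)

lemma H1.continuous (φ : H1) : Continuous φ.toFun := by
  have h : φ.toFun = fun x => φ.toFun 0 + ∫ t in (0:ℝ)..x, φ.dx t := funext φ.eq_int
  rw [h]
  exact continuous_const.add
    (intervalIntegral.continuous_primitive (fun a b => l2_intervalIntegrable φ.dx_memL2 a b) 0)

lemma sq_norm_integrable (φ : H1) : Integrable (fun x => ‖φ.toFun x‖ ^ 2) volume := by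
  have := φ.memL2.integrable_norm_rpow (by norm_num) (by norm_num)
  have h2 : ((2 : ℝ≥0∞)).toReal = ((2:ℕ):ℝ) := by norm_num
  simpa [h2, Real.rpow_natCast] using this

lemma massSq_nonneg (φ : H1) : 0 ≤ massSq φ :=
  integral_nonneg fun x => by positivity

lemma gradSq_nonneg (φ : H1) : 0 ≤ gradSq φ :=
  integral_nonneg fun x => by positivity

lemma lpPow_nonneg (p : ℝ) (φ : H1) : 0 ≤ lpPow p φ :=
  integral_nonneg fun x => Real.rpow_nonneg (norm_nonneg _) _

lemma massSq_pos (φ : H1) (hφ : φ.toFun ≠ 0) : 0 < massSq φ := by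
  rcases lt_or_eq_of_le (massSq_nonneg φ) with h | h
  · exact h
  · exfalso
    have h0 : ∫ x : ℝ, ‖φ.toFun x‖ ^ 2 = 0 := h.symm
    rw [integral_eq_zero_iff_of_nonneg (fun x => by positivity) (sq_norm_integrable φ)] at h0
    have hae : φ.toFun =ᵐ[volume] (fun _ => (0:ℂ)) := by
      filter_upwards [h0] with x hx
      have : ‖φ.toFun x‖ ^ 2 = 0 := hx
      simpa [pow_eq_zero_iff, norm_eq_zero] using this
    have := (φ.continuous.ae_eq_iff_eq volume continuous_const).mp hae
    exact hφ this

lemma toFun_eq_zero_of_gradSq_eq_zero (φ : H1) (h : gradSq φ = 0) : φ.toFun = 0 := by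
  have h0 : ∫ x : ℝ, ‖φ.dx x‖ ^ 2 = 0 := h
  have hint : Integrable (fun x => ‖φ.dx x‖ ^ 2) volume := by
    have := φ.dx_memL2.integrable_norm_rpow (by norm_num) (by norm_num)
    have h2 : ((2 : ℝ≥0∞)).toReal = ((2:ℕ):ℝ) := by norm_num
    simpa [h2, Real.rpow_natCast] using this
  rw [integral_eq_zero_iff_of_nonneg (fun x => by positivity) hint] at h0
  have hae : φ.dx =ᵐ[volume] (fun _ => (0:ℂ)) := by
    filter_upwards [h0] with x hx
    have : ‖φ.dx x‖ ^ 2 = 0 := hx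
    simpa [pow_eq_zero_iff, norm_eq_zero] using this
  have hconst : ∀ x : ℝ, φ.toFun x = φ.toFun 0 := by
    intro x
    rw [φ.eq_int x]
    have : (∫ t in (0:ℝ)..x, φ.dx t) = ∫ t in (0:ℝ)..x, (0:ℂ) := by
      apply intervalIntegral.integral_congr_ae
      filter_upwards [hae] with t ht _
      exact ht
    simp [this]
  have hmem : MemLp (fun _ : ℝ => φ.toFun 0) 2 (volume : Measure ℝ) := by
    have : φ.toFun = fun _ => φ.toFun 0 := funext hconst
    rw [← this]; exact φ.memL2
  rw [memLp_const_iff (by norm_num) (by norm_num)] at hmem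
  rcases hmem with h1 | h1
  · funext x; rw [hconst x, h1]; rfl
  · simp [Real.volume_univ] at h1

noncomputable def hscale (c : ℝ) (φ : H1) : H1 where
  toFun := fun x => (c:ℂ) * φ.toFun x
  dx := fun x => (c:ℂ) * φ.dx x
  memL2 := φ.memL2.const_mul (c:ℂ)
  dx_memL2 := φ.dx_memL2.const_mul (c:ℂ)
  eq_int := fun x => by
    simp only [intervalIntegral.integral_const_mul]
    rw [φ.eq_int x]; ring

lemma gradSq_hscale (c : ℝ) (hc : 0 ≤ c) (φ : H1) :
    gradSq (hscale c φ) = c ^ 2 * gradSq φ := by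
  unfold gradSq hscale
  simp only [norm_mul, Complex.norm_real, Real.norm_eq_abs, abs_of_nonneg hc, mul_pow]
  exact integral_const_mul _ _

lemma massSq_hscale (c : ℝ) (hc : 0 ≤ c) (φ : H1) :
    massSq (hscale c φ) = c ^ 2 * massSq φ := by
  unfold massSq hscale
  simp only [norm_mul, Complex.norm_real, Real.norm_eq_abs, abs_of_nonneg hc, mul_pow]
  exact integral_const_mul _ _

lemma lpPow_hscale (p : ℝ) (c : ℝ) (hc : 0 ≤ c) (φ : H1) :
    lpPow p (hscale c φ) = c ^ (p+1) * lpPow p φ := by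
  unfold lpPow hscale
  simp only [norm_mul, Complex.norm_real, Real.norm_eq_abs, abs_of_nonneg hc]
  have : ∀ x : ℝ, (c * ‖φ.toFun x‖) ^ (p+1) = c ^ (p+1) * ‖φ.toFun x‖ ^ (p+1) :=
    fun x => Real.mul_rpow hc (norm_nonneg _)
  simp only [this]
  exact integral_const_mul _ _


section arith

variable {p ω α β : ℝ}

lemma max_pos (hα : 0 < α) : 0 < max (2*α-β) (2*α+β) := by
  rcases le_total β 0 with h | h
  · exact lt_max_of_lt_left (by linarith)
  · exact lt_max_of_lt_right (by linarith)

lemma max_le_pab (hp : 5 < p) (hα : 0 < α) (hβ2 : 0 ≤ 2*α + β) :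
    max (2*α-β) (2*α+β) ≤ (p+1)*α+β := by
  apply max_le <;> nlinarith

lemma J_repr (hp : 5 < p) (hα : 0 < α) (φ : H1) :
    Jfun p ω 0 α β φ =
      ((max (2*α-β) (2*α+β) - (2*α-β))/(4 * max (2*α-β) (2*α+β))) * gradSq φ
      + (ω * (max (2*α-β) (2*α+β) - (2*α+β))/(2 * max (2*α-β) (2*α+β))) * massSq φ
      + (((p+1)*α+β - max (2*α-β) (2*α+β))/((p+1) * max (2*α-β) (2*α+β))) * lpPow p φ := by
  have hm : max (2*α-β) (2*α+β) ≠ 0 := (max_pos hα).ne'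
  have hp1 : p + 1 ≠ 0 := by linarith
  unfold Jfun Sfun Kfun
  field_simp
  ring

lemma J_nonneg (hp : 5 < p) (hω : 0 < ω) (hα : 0 < α) (hβ1 : 0 ≤ 2*α - β)
    (hβ2 : 0 ≤ 2*α + β) (φ : H1) : 0 ≤ Jfun p ω 0 α β φ := by
  rw [J_repr hp hα φ]
  have hm := max_pos (β := β) hα
  have h1 := le_max_left (2*α-β) (2*α+β)
  have h2 := le_max_right (2*α-β) (2*α+β)
  have h3 := max_le_pab hp hα hβ2
  have := gradSq_nonneg φ
  have := massSq_nonneg φ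
  have := lpPow_nonneg p φ
  have c1 : (0:ℝ) ≤ (max (2*α-β) (2*α+β) - (2*α-β))/(4 * max (2*α-β) (2*α+β)) := by
    apply div_nonneg <;> linarith
  have c2 : (0:ℝ) ≤ ω * (max (2*α-β) (2*α+β) - (2*α+β))/(2 * max (2*α-β) (2*α+β)) := by
    apply div_nonneg
    · nlinarith
    · linarith
  have c3 : (0:ℝ) ≤ ((p+1)*α+β - max (2*α-β) (2*α+β))/((p+1) * max (2*α-β) (2*α+β)) := by
    apply div_nonneg
    · linarith
    · nlinarith
  positivity
end arith

lemma K_zero_eq (p ω α β : ℝ) (φ : H1) :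
    Kfun p ω 0 α β φ = ((2*α-β)/4) * gradSq φ + (ω*(2*α+β)/2) * massSq φ
      - (((p+1)*α+β)/(p+1)) * lpPow p φ := by
  unfold Kfun; ring

set_option maxHeartbeats 1000000 in
lemma key (p ω α β : ℝ) (hp : 5 < p) (hω : 0 < ω)
    (hα : 0 < α) (hβ1 : 0 ≤ 2*α - β) (hβ2 : 0 ≤ 2*α + β)
    (φ : H1) (hφ : φ.toFun ≠ 0) (hK : Kfun p ω 0 α β φ ≤ 0) :
    ∃ ψ : H1, ψ.toFun ≠ 0 ∧ Kfun p ω 0 α β ψ = 0 ∧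
      Sfun p ω 0 ψ ≤ Jfun p ω 0 α β φ := by
  set G := gradSq φ with hG
  set M := massSq φ with hM
  set L := lpPow p φ with hL
  have hG0 : 0 ≤ G := gradSq_nonneg φ
  have hM0 : 0 ≤ M := massSq_nonneg φ
  have hL0 : 0 ≤ L := lpPow_nonneg p φ
  set A : ℝ := ((2*α-β)/4) * G + (ω*(2*α+β)/2) * M with hAdef
  set c : ℝ := ((p+1)*α+β)/(p+1) with hcdef
  have hc : 0 < c := by
    apply div_pos
    · nlinarith
    · linarith
  have hA : 0 < A := by
    by_cases h2 : 2*α - β = 0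
    · have hMp : 0 < M := massSq_pos φ hφ
      rw [hAdef, h2]
      have hβ : β = 2*α := by linarith
      rw [hβ]
      nlinarith [mul_pos (mul_pos hω hα) hMp]
    · have h2' : 0 < 2*α - β := lt_of_le_of_ne hβ1 (Ne.symm h2)
      have hGp : 0 < G := by
        rcases lt_or_eq_of_le hG0 with h | h
        · exact h
        · exact absurd (toFun_eq_zero_of_gradSq_eq_zero φ h.symm) hφ
      rw [hAdef]
      nlinarith [mul_pos h2' hGp, mul_nonneg (mul_nonneg hω.le hβ2) hM0]
  have hKA : A - c * L ≤ 0 := by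
    have h := hK
    rw [K_zero_eq, ← hG, ← hM, ← hL, ← hcdef] at h
    rw [hAdef]
    linarith
  have hcL : 0 < c * L := lt_of_lt_of_le hA (by linarith)
  have hLp : 0 < L := by nlinarith
  set t : ℝ := (A / (c * L)) ^ (1/(p-1)) with htdef
  have hx : 0 < A / (c * L) := div_pos hA hcL
  have ht0 : 0 < t := Real.rpow_pos_of_pos hx _
  have hx1 : A / (c * L) ≤ 1 := (div_le_one hcL).mpr (by linarith)
  have ht1 : t ≤ 1 := Real.rpow_le_one hx.le hx1 (one_div_nonneg.mpr (by linarith))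
  have htp : t ^ (p - 1) = A / (c * L) := by
    rw [htdef, ← Real.rpow_mul hx.le, one_div_mul_cancel (by linarith : p - 1 ≠ 0),
      Real.rpow_one]
  have htpp : t ^ (p + 1) = t ^ 2 * (A / (c * L)) := by
    rw [show p + 1 = 2 + (p - 1) by ring, Real.rpow_add ht0, htp]
    congr 1
    rw [show (2:ℝ) = ((2:ℕ):ℝ) by norm_num, Real.rpow_natCast]
  refine ⟨hscale t φ, ?_, ?_, ?_⟩
  · intro h
    apply hφ
    funext x
    have hx0 := congrFun h x
    simp only [hscale, Pi.zero_apply] at hx0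
    rcases mul_eq_zero.mp hx0 with h' | h'
    · exact absurd (Complex.ofReal_eq_zero.mp h') ht0.ne'
    · exact h'
  · rw [K_zero_eq, gradSq_hscale t ht0.le, massSq_hscale t ht0.le, lpPow_hscale p t ht0.le,
      htpp, ← hG, ← hM, ← hL, ← hcdef]
    have hne : c * L ≠ 0 := hcL.ne'
    field_simp
    ring
  · have hKz : Kfun p ω 0 α β (hscale t φ) = 0 := by
      rw [K_zero_eq, gradSq_hscale t ht0.le, massSq_hscale t ht0.le, lpPow_hscale p t ht0.le,
        htpp, ← hG, ← hM, ← hL, ← hcdef]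
      have hne : c * L ≠ 0 := hcL.ne'
      field_simp
      ring
    have hSJ : Sfun p ω 0 (hscale t φ) = Jfun p ω 0 α β (hscale t φ) := by
      rw [Jfun, hKz]
      simp
    rw [hSJ, J_repr hp hα, J_repr hp hα φ, gradSq_hscale t ht0.le, massSq_hscale t ht0.le,
      lpPow_hscale p t ht0.le, ← hG, ← hM, ← hL]
    have hm := max_pos (β := β) hα
    have h1 := le_max_left (2*α-β) (2*α+β)
    have h2 := le_max_right (2*α-β) (2*α+β)
    have h3 := max_le_pab hp hα hβ2
    have c1 : (0:ℝ) ≤ (max (2*α-β) (2*α+β) - (2*α-β))/(4 * max (2*α-β) (2*α+β)) := by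
      apply div_nonneg <;> linarith
    have c2 : (0:ℝ) ≤ ω * (max (2*α-β) (2*α+β) - (2*α+β))/(2 * max (2*α-β) (2*α+β)) := by
      apply div_nonneg
      · nlinarith
      · linarith
    have c3 : (0:ℝ) ≤ ((p+1)*α+β - max (2*α-β) (2*α+β))/((p+1) * max (2*α-β) (2*α+β)) := by
      apply div_nonneg
      · linarith
      · nlinarith
    have ht2 : t ^ 2 ≤ 1 := by nlinarith
    have htp1 : t ^ (p + 1) ≤ 1 := Real.rpow_le_one ht0.le ht1 (by linarith)
    have e1 : t ^ 2 * G ≤ G := by nlinarith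
    have e2 : t ^ 2 * M ≤ M := by nlinarith
    have e3 : t ^ (p+1) * L ≤ L := by nlinarith
    gcongr ?_ + ?_ + ?_
    · exact mul_le_mul_of_nonneg_left e1 c1
    · exact mul_le_mul_of_nonneg_left e2 c2
    · exact mul_le_mul_of_nonneg_left e3 c3


/-- `l^{α,β}_ω = j^{α,β}_ω`. -/
theorem l_eq_j (p ω α β : ℝ) (hp : 5 < p) (hω : 0 < ω)
    (hα : 0 < α) (hβ1 : 0 ≤ 2*α - β) (hβ2 : 0 ≤ 2*α + β) :
    sInf {s : ℝ | ∃ φ : H1, φ.toFun ≠ 0 ∧ Kfun p ω 0 α β φ = 0 ∧ Sfun p ω 0 φ = s} =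
      sInf {s : ℝ | ∃ φ : H1, φ.toFun ≠ 0 ∧ Kfun p ω 0 α β φ ≤ 0 ∧ Jfun p ω 0 α β φ = s} := by
  set Lset := {s : ℝ | ∃ φ : H1, φ.toFun ≠ 0 ∧ Kfun p ω 0 α β φ = 0 ∧ Sfun p ω 0 φ = s}
    with hLset
  set Jset := {s : ℝ | ∃ φ : H1, φ.toFun ≠ 0 ∧ Kfun p ω 0 α β φ ≤ 0 ∧ Jfun p ω 0 α β φ = s}
    with hJset
  have hSJ : ∀ φ : H1, Kfun p ω 0 α β φ = 0 → Jfun p ω 0 α β φ = Sfun p ω 0 φ := by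
    intro φ h
    rw [Jfun, h]
    simp
  have hsub : Lset ⊆ Jset := by
    rintro s ⟨φ, h1, h2, h3⟩
    exact ⟨φ, h1, h2.le, by rw [hSJ φ h2]; exact h3⟩
  have hbddJ : BddBelow Jset := by
    refine ⟨0, ?_⟩
    rintro s ⟨φ, _, _, h3⟩
    rw [← h3]
    exact J_nonneg hp hω hα hβ1 hβ2 φ
  have hbddL : BddBelow Lset := hbddJ.mono hsub
  by_cases hne : ∃ φ : H1, φ.toFun ≠ 0 ∧ Kfun p ω 0 α β φ ≤ 0
  · obtain ⟨φ0, hφ0, hK0⟩ := hne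
    have hJne : Jset.Nonempty := ⟨_, φ0, hφ0, hK0, rfl⟩
    obtain ⟨ψ0, g1, g2, _⟩ := key p ω α β hp hω hα hβ1 hβ2 φ0 hφ0 hK0
    have hLne : Lset.Nonempty := ⟨_, ψ0, g1, g2, rfl⟩
    apply le_antisymm
    · apply le_csInf hJne
      rintro s ⟨φ, h1, h2, h3⟩
      obtain ⟨ψ, g1, g2, g3⟩ := key p ω α β hp hω hα hβ1 hβ2 φ h1 h2
      calc sInf Lset ≤ Sfun p ω 0 ψ := csInf_le hbddL ⟨ψ, g1, g2, rfl⟩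
        _ ≤ s := by rw [← h3]; exact g3
    · apply le_csInf hLne
      rintro s hs
      exact csInf_le hbddJ (hsub hs)
  · push_neg at hne
    have hL : Lset = ∅ := by
      rw [hLset, Set.eq_empty_iff_forall_notMem]
      rintro s ⟨φ, h1, h2, _⟩
      exact absurd h2.le (hne φ h1).not_ge
    have hJ : Jset = ∅ := by
      rw [hJset, Set.eq_empty_iff_forall_notMem]
      rintro s ⟨φ, h1, h2, _⟩
      exact absurd h2 (hne φ h1).not_ge
    rw [hL, hJ]
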